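/- arXiv:0806.1514 — 9 statements merged into one kernel-verified Lean document; each statement's English description precedes it below -/
import Mathlib

section
/- For every positive integer n, the number 1 + 2^(2^n) + 2^(2^(n+1)) is divisible by 21. -/
theorem stmt_0 (n : ℕ) (hn : 0 < n) :
    21 ∣ 1 + 2 ^ (2 ^ n) + 2 ^ (2 ^ (n + 1)) := by
  induction n, hn using Nat.le_induction with
  | base => decide
  | succ n hn ih =>
    have h1 : (2:ℤ) ^ (2 ^ (n + 1)) = ((2:ℤ) ^ (2 ^ n)) ^ 2 := by
      rw [pow_succ, pow_mul]
    have h2 : (2:ℤ) ^ (2 ^ (n + 2)) = ((2:ℤ) ^ (2 ^ n)) ^ 4 := by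
      rw [show n + 2 = n + 1 + 1 from rfl, pow_succ, pow_mul, h1]; ring
    zify at ih ⊢
    obtain ⟨k, hk⟩ := ih
    refine ⟨k * (((2:ℤ) ^ (2 ^ n)) ^ 2 - (2:ℤ) ^ (2 ^ n) + 1), ?_⟩
    rw [h2, h1]
    linear_combination hk * (((2:ℤ) ^ (2 ^ n)) ^ 2 - (2:ℤ) ^ (2 ^ n) + 1)
end

section
/- For every integer n ≥ 2, the number (1 + 2^(2^n) + 2^(2^(n+1)))/3 is a composite integer divisible by 7. -/
lemma two_pow_mod_three (n : ℕ) : 2 ^ n % 3 = if n % 2 = 0 then 1 else 2 := by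
  induction n with
  | zero => rfl
  | succ k ih =>
    rw [pow_succ, Nat.mul_mod, ih]
    rcases Nat.even_or_odd k with hk | hk
    · simp [Nat.even_iff.mp hk, Nat.succ_mod_two_eq_one_iff.mpr (Nat.even_iff.mp hk)]
    · simp [Nat.odd_iff.mp hk, Nat.succ_mod_two_eq_zero_iff.mpr (Nat.odd_iff.mp hk)]

lemma three_dvd (n : ℕ) (hn : 1 ≤ n) : 3 ∣ 1 + 2 ^ (2 ^ n) + 2 ^ (2 ^ (n + 1)) := by
  have h3 : ((1 + 2 ^ (2 ^ n) + 2 ^ (2 ^ (n + 1)) : ℕ) : ZMod 3) = 0 := by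
    push_cast
    have h2 : (2 : ZMod 3) = -1 := by decide
    rw [h2, Even.neg_one_pow, Even.neg_one_pow]
    · ring_nf
      decide
    · exact (Nat.even_pow).mpr ⟨even_two, by omega⟩
    · exact (Nat.even_pow).mpr ⟨even_two, by omega⟩
  exact (ZMod.natCast_eq_zero_iff _ _).mp h3

lemma seven_dvd (n : ℕ) : 7 ∣ 1 + 2 ^ (2 ^ n) + 2 ^ (2 ^ (n + 1)) := by
  have h7 : ((1 + 2 ^ (2 ^ n) + 2 ^ (2 ^ (n + 1)) : ℕ) : ZMod 7) = 0 := by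
    push_cast
    have hord : (2 : ZMod 7) ^ 3 = 1 := by decide
    rw [pow_eq_pow_mod (2 ^ n) hord, pow_eq_pow_mod (2 ^ (n + 1)) hord]
    have h1 := two_pow_mod_three n
    have h2 := two_pow_mod_three (n + 1)
    rcases Nat.even_or_odd n with hn | hn
    · have e1 : n % 2 = 0 := Nat.even_iff.mp hn
      have e2 : (n + 1) % 2 = 1 := by omega
      rw [e1] at h1; rw [e2] at h2; simp at h1 h2
      rw [h1, h2]; decide
    · have e1 : n % 2 = 1 := Nat.odd_iff.mp hn
      have e2 : (n + 1) % 2 = 0 := by omega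
      rw [e1] at h1; rw [e2] at h2; simp at h1 h2
      rw [h1, h2]; decide
  exact (ZMod.natCast_eq_zero_iff _ _).mp h7

theorem stmt_1 (n : ℕ) (hn : 2 ≤ n) :
    7 ∣ (1 + 2 ^ (2 ^ n) + 2 ^ (2 ^ (n + 1))) / 3 ∧
    1 < (1 + 2 ^ (2 ^ n) + 2 ^ (2 ^ (n + 1))) / 3 ∧
    ¬ Nat.Prime ((1 + 2 ^ (2 ^ n) + 2 ^ (2 ^ (n + 1))) / 3) := by
  set S := 1 + 2 ^ (2 ^ n) + 2 ^ (2 ^ (n + 1)) with hS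
  have h3 : 3 ∣ S := three_dvd n (by omega)
  have h7 : 7 ∣ S := seven_dvd n
  have h21 : 21 ∣ S := Nat.Coprime.mul_dvd_of_dvd_of_dvd (by decide) h3 h7
  set N := S / 3 with hN
  have hSN : S = 3 * N := (Nat.div_mul_cancel h3).symm.trans (mul_comm _ _)
  have h7N : 7 ∣ N := by
    obtain ⟨k, hk⟩ := h21
    have : 3 * N = 3 * (7 * k) := by omega
    omega
  have hbig : 2 ^ (2 ^ n) ≥ 16 := by
    calc (16 : ℕ) = 2 ^ (2 ^ 2) := by norm_num
    _ ≤ 2 ^ (2 ^ n) := Nat.pow_le_pow_right (by norm_num)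
        (Nat.pow_le_pow_right (by norm_num) hn)
  have hbig2 : 2 ^ (2 ^ (n + 1)) ≥ 16 := by
    calc (16 : ℕ) = 2 ^ (2 ^ 2) := by norm_num
    _ ≤ 2 ^ (2 ^ (n + 1)) := Nat.pow_le_pow_right (by norm_num)
        (Nat.pow_le_pow_right (by norm_num) (by omega))
  have hS33 : 33 ≤ S := by omega
  have hN11 : 11 ≤ N := by omega
  refine ⟨h7N, by omega, ?_⟩
  intro hp
  rcases (hp.eq_one_or_self_of_dvd 7 h7N) with h | h
  · omega
  · obtain ⟨k, hk⟩ := h7N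
    omega
end

section
/- Let N ≥ 3 be odd, s = ord_N(2), n with 2^n ≡ 1 (mod s), a = ord_s(2), l the largest integer with 2^l < s, and b the residue of 2^(l+1) modulo s with 0 ≤ b < s. Set k_l = 1 + 2^(2^0) + 2^(2^1) + ... + 2^(2^l) and k_b = 2^b + 2^(b·2) + 2^(b·2^2) + ... + 2^(b·2^(a−1)). Then for every i ≥ 0, 1 + 2^(2^n) + 2^(2^(n+1)) + ... + 2^(2^(n+l+i·a)) ≡ k_l + i·k_b (mod N). -/
theorem stmt_5 (N : ℕ) (hN3 : 3 ≤ N) (hNodd : Odd N)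
    (s : ℕ) (hs : s = orderOf (2 : ZMod N))
    (n : ℕ) (hn : 0 < n) (h : 2 ^ n ≡ 1 [MOD s])
    (a : ℕ) (ha : a = orderOf (2 : ZMod s))
    (l : ℕ) (hl : 2 ^ l < s) (hl' : s ≤ 2 ^ (l + 1))
    (b : ℕ) (hb : b = 2 ^ (l + 1) % s)
    (kl kb : ℕ)
    (hkl : kl = 1 + ∑ j ∈ Finset.range (l + 1), 2 ^ (2 ^ j))
    (hkb : kb = ∑ j ∈ Finset.range a, 2 ^ (b * 2 ^ j)) :
    ∀ i : ℕ,
      1 + ∑ j ∈ Finset.range (l + i * a + 1), 2 ^ (2 ^ (n + j)) ≡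
        kl + i * kb [MOD N] := by
  -- key lemma: congruent exponents mod s give equal powers of 2 in ZMod N
  have key : ∀ x y : ℕ, x ≡ y [MOD s] → (2 : ZMod N) ^ x = (2 : ZMod N) ^ y := by
    intro x y hxy
    have hx : (2 : ZMod N) ^ (x % s) = (2 : ZMod N) ^ x := by
      rw [hs]; exact pow_mod_orderOf _ _
    have hy : (2 : ZMod N) ^ (y % s) = (2 : ZMod N) ^ y := by
      rw [hs]; exact pow_mod_orderOf _ _
    rw [← hx, ← hy]
    exact congrArg (fun m => (2 : ZMod N) ^ m) hxy
  -- 2^a ≡ 1 [MOD s]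
  have has : (2 : ℕ) ^ a ≡ 1 [MOD s] := by
    rw [← ZMod.natCast_eq_natCast_iff]
    push_cast
    rw [ha]
    exact pow_orderOf_eq_one (2 : ZMod s)
  -- 2^(l+1) ≡ b [MOD s]
  have hlb : (2 : ℕ) ^ (l + 1) ≡ b [MOD s] := by
    rw [hb]; exact (Nat.mod_modEq _ _).symm
  -- 2^(n+j) ≡ 2^j [MOD s]
  have hnj : ∀ j : ℕ, (2 : ℕ) ^ (n + j) ≡ 2 ^ j [MOD s] := by
    intro j
    calc (2:ℕ) ^ (n + j) = 2 ^ n * 2 ^ j := by rw [pow_add]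
      _ ≡ 1 * 2 ^ j [MOD s] := h.mul_right _
      _ = 2 ^ j := one_mul _
  intro i
  rw [← ZMod.natCast_eq_natCast_iff]
  subst hkl hkb
  push_cast
  induction i with
  | zero =>
    simp only [Nat.cast_zero, zero_mul, add_zero]
    congr 1
    exact Finset.sum_congr rfl fun j _ => key _ _ (hnj j)
  | succ i ih =>
    have hrange : l + (i + 1) * a + 1 = (l + i * a + 1) + a := by ring
    rw [hrange, Finset.sum_range_add, ← add_assoc, ih]
    have htail : ∀ t : ℕ, t ∈ Finset.range a →
        (2 : ZMod N) ^ (2 ^ (n + (l + i * a + 1 + t))) = (2 : ZMod N) ^ (b * 2 ^ t) := by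
      intro t _
      apply key
      calc (2:ℕ) ^ (n + (l + i * a + 1 + t))
          = 2 ^ n * (2 ^ a) ^ i * 2 ^ (l + 1) * 2 ^ t := by
            rw [← pow_mul, ← pow_add, ← pow_add, ← pow_add]; ring_nf
        _ ≡ 1 * 1 ^ i * b * 2 ^ t [MOD s] :=
            (((h.mul (has.pow i)).mul hlb).mul (Nat.ModEq.refl _))
        _ = b * 2 ^ t := by ring
    rw [Finset.sum_congr rfl htail]
    push_cast
    ring
end

section
/- Let N ≥ 3 be odd, s = ord_N(2), n ≥ 2 with 2^n ≡ 1 (mod s), a = ord_s(2), l the largest integer with 2^l < s, b ≡ 2^(l+1) (mod s) with 0 ≤ b < s, k_l = 1 + Σ_{j=0}^{l} 2^(2^j), and k_b = Σ_{j=0}^{a−1} 2^(b·2^j). If d = gcd(k_b, N) divides k_l, then there exist infinitely many positive integers m such that N divides 1 + 2^(2^n) + 2^(2^(n+1)) + ... + 2^(2^(n+m)). -/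
private lemma periodic_sum {M : Type*} [AddCommMonoid M] (g : ℕ → M) (a : ℕ) :
    ∀ w, ∑ i ∈ Finset.range (w * a), g (i % a) = w • ∑ r ∈ Finset.range a, g r := by
  intro w
  induction w with
  | zero => simp
  | succ w ih =>
    rw [Nat.succ_mul, Finset.sum_range_add, ih, succ_nsmul]
    congr 1
    refine Finset.sum_congr rfl fun i hi => ?_
    rw [Nat.mul_add_mod', Nat.mod_eq_of_lt (Finset.mem_range.mp hi)]

private lemma exists_t0 (kl kb N : ℕ) (hN : 0 < N) (hd : Nat.gcd kb N ∣ kl) :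
    ∃ t0 : ℕ, (kl : ZMod N) + (t0 : ZMod N) * (kb : ZMod N) = 0 := by
  obtain ⟨q, hq⟩ := hd
  set A := Nat.gcdA kb N with hA
  set B := Nat.gcdB kb N with hB
  have hbez : (Nat.gcd kb N : ℤ) = kb * A + N * B := Nat.gcd_eq_gcd_ab kb N
  set c : ℤ := -((q : ℤ) * A) with hc
  refine ⟨(c % N).toNat, ?_⟩
  have hNz : (N : ℤ) ≠ 0 := by exact_mod_cast hN.ne'
  have htn : (((c % N).toNat : ℕ) : ℤ) = c % N :=
    Int.toNat_of_nonneg (Int.emod_nonneg c hNz)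
  have hdvd : (N : ℤ) ∣ ((kl : ℤ) + (((c % N).toNat : ℕ) : ℤ) * kb) := by
    have h1 : (kl : ℤ) = (q : ℤ) * ((kb : ℤ) * A + (N : ℤ) * B) := by
      rw [← hbez]; exact_mod_cast hq.trans (Nat.mul_comm _ _)
    have h2 : (N : ℤ) ∣ ((((c % N).toNat : ℕ) : ℤ) - c) := by
      rw [htn, Int.emod_def]
      exact ⟨-(c / N), by ring⟩
    obtain ⟨u, hu⟩ := h2
    refine ⟨(q : ℤ) * B + u * kb, ?_⟩
    have : (((c % N).toNat : ℕ) : ℤ) = c + (N : ℤ) * u := by linarith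
    rw [h1, this, hc]; ring
  have := (ZMod.intCast_zmod_eq_zero_iff_dvd _ N).mpr hdvd
  push_cast at this
  exact this

theorem stmt_6 (N : ℕ) (hN3 : 3 ≤ N) (hNodd : Odd N)
    (s : ℕ) (hs : s = orderOf (2 : ZMod N))
    (n : ℕ) (hn : 2 ≤ n) (h : 2 ^ n ≡ 1 [MOD s])
    (a : ℕ) (ha : a = orderOf (2 : ZMod s))
    (l : ℕ) (hl : 2 ^ l < s) (hl' : s ≤ 2 ^ (l + 1))
    (b : ℕ) (hb : b = 2 ^ (l + 1) % s)
    (kl kb : ℕ)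
    (hkl : kl = 1 + ∑ j ∈ Finset.range (l + 1), 2 ^ (2 ^ j))
    (hkb : kb = ∑ j ∈ Finset.range a, 2 ^ (b * 2 ^ j))
    (hd : Nat.gcd kb N ∣ kl) :
    {m : ℕ | 0 < m ∧ N ∣ 1 + ∑ j ∈ Finset.range (m + 1), 2 ^ (2 ^ (n + j))}.Infinite := by
  have hN0 : 0 < N := by omega
  haveI : NeZero N := ⟨by omega⟩
  -- a is positive
  have h2s : ((2 : ℕ) : ZMod s) ^ n = 1 := by
    have := (ZMod.natCast_eq_natCast_iff _ _ _).mpr h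
    push_cast at this
    push_cast
    exact this
  have ha0 : 0 < a := by
    rw [ha]
    have : IsOfFinOrder ((2 : ℕ) : ZMod s) :=
      isOfFinOrder_iff_pow_eq_one.mpr ⟨n, by omega, h2s⟩
    have := this.orderOf_pos
    simpa using this
  -- 2^a ≡ 1 [MOD s]
  have h2a : (2 : ℕ) ^ a ≡ 1 [MOD s] := by
    have : ((2 : ℕ) : ZMod s) ^ a = 1 := by
      rw [ha]; norm_num [pow_orderOf_eq_one]
    rw [← ZMod.natCast_eq_natCast_iff]
    push_cast
    exact this
  -- key: exponents congruent mod s give equal powers of 2 in ZMod N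
  have pow_eq : ∀ e₁ e₂ : ℕ, e₁ ≡ e₂ [MOD s] → (2 : ZMod N) ^ e₁ = (2 : ZMod N) ^ e₂ := by
    intro e₁ e₂ he
    rw [← pow_mod_orderOf (2 : ZMod N) e₁, ← pow_mod_orderOf (2 : ZMod N) e₂, ← hs]
    rw [show e₁ % s = e₂ % s from he]
  -- 2^i ≡ 2^(i % a) [MOD s]
  have hpow : ∀ i : ℕ, (2 : ℕ) ^ i ≡ 2 ^ (i % a) [MOD s] := by
    intro i
    conv_lhs => rw [← Nat.div_add_mod i a]
    rw [pow_add, pow_mul]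
    calc ((2 : ℕ) ^ a) ^ (i / a) * 2 ^ (i % a)
        ≡ 1 ^ (i / a) * 2 ^ (i % a) [MOD s] := Nat.ModEq.mul_right _ (h2a.pow _)
      _ = 2 ^ (i % a) := by rw [one_pow, one_mul]
  -- main congruence
  have hmain : ∀ w : ℕ,
      ((1 + ∑ j ∈ Finset.range (l + w * a + 1), 2 ^ (2 ^ (n + j)) : ℕ) : ZMod N)
        = (kl : ZMod N) + (w : ZMod N) * (kb : ZMod N) := by
    intro w
    have hsplit : l + w * a + 1 = (l + 1) + w * a := by omega
    rw [hsplit]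
    push_cast
    rw [Finset.sum_range_add]
    have h1 : ∑ j ∈ Finset.range (l + 1), (2 : ZMod N) ^ (2 ^ (n + j))
        = ∑ j ∈ Finset.range (l + 1), (2 : ZMod N) ^ (2 ^ j) := by
      refine Finset.sum_congr rfl fun j _ => ?_
      refine pow_eq _ _ ?_
      calc (2 : ℕ) ^ (n + j) = 2 ^ n * 2 ^ j := pow_add 2 n j
        _ ≡ 1 * 2 ^ j [MOD s] := h.mul_right _
        _ = 2 ^ j := one_mul _
    have h2 : ∑ i ∈ Finset.range (w * a), (2 : ZMod N) ^ (2 ^ (n + (l + 1 + i)))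
        = ∑ i ∈ Finset.range (w * a), (2 : ZMod N) ^ (b * 2 ^ (i % a)) := by
      refine Finset.sum_congr rfl fun i _ => ?_
      refine pow_eq _ _ ?_
      calc (2 : ℕ) ^ (n + (l + 1 + i)) = 2 ^ n * 2 ^ (l + 1 + i) := pow_add 2 n _
        _ ≡ 1 * 2 ^ (l + 1 + i) [MOD s] := h.mul_right _
        _ = 2 ^ (l + 1) * 2 ^ i := by rw [one_mul, pow_add]
        _ ≡ b * 2 ^ i [MOD s] := by
            rw [hb]; exact (Nat.mod_modEq _ s).symm.mul_right _
        _ ≡ b * 2 ^ (i % a) [MOD s] := (hpow i).mul_left b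
    rw [h1, h2, periodic_sum (fun r => (2 : ZMod N) ^ (b * 2 ^ r)) a w]
    have hkb' : (kb : ZMod N) = ∑ r ∈ Finset.range a, (2 : ZMod N) ^ (b * 2 ^ r) := by
      rw [hkb]; push_cast; rfl
    have hkl' : (kl : ZMod N) = 1 + ∑ j ∈ Finset.range (l + 1), (2 : ZMod N) ^ (2 ^ j) := by
      rw [hkl]; push_cast; rfl
    rw [hkb', hkl', nsmul_eq_mul]
    ring
  obtain ⟨t0, ht0⟩ := exists_t0 kl kb N hN0 hd
  -- the family of solutions
  refine Set.infinite_of_injective_forall_mem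
    (f := fun t : ℕ => l + (t0 + (t + 1) * N) * a) ?_ ?_
  · intro t₁ t₂ hteq
    simp only at hteq
    have h1 : (t₁ + 1) * (N * a) = (t₂ + 1) * (N * a) := by
      have e1 : l + (t0 + (t₁ + 1) * N) * a = l + t0 * a + (t₁ + 1) * (N * a) := by ring
      have e2 : l + (t0 + (t₂ + 1) * N) * a = l + t0 * a + (t₂ + 1) * (N * a) := by ring
      omega
    have hNa : 0 < N * a := Nat.mul_pos hN0 ha0
    have := Nat.eq_of_mul_eq_mul_right hNa h1
    omega
  · intro t
    constructor
    · have : 0 < (t0 + (t + 1) * N) * a :=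
        Nat.mul_pos (by positivity) ha0
      exact Nat.lt_of_lt_of_le this (Nat.le_add_left _ _)
    · rw [← ZMod.natCast_eq_zero_iff]
      rw [hmain (t0 + (t + 1) * N)]
      have : ((t0 + (t + 1) * N : ℕ) : ZMod N) = (t0 : ZMod N) := by
        push_cast
        simp [ZMod.natCast_self]
      rw [this, ht0]
end

section
/- Under the hypotheses of Theorem 1 (N ≥ 3 odd, s = ord_N(2), 2^n ≡ 1 (mod s), a = ord_s(2), l maximal with 2^l < s, b ≡ 2^(l+1) mod s, k_l and k_b as defined, gcd(k_b,N) dividing k_l), if r is a positive integer with k_l + r·k_b ≡ 0 (mod N), then for every i ≥ 0, taking m = l + r·a + i·N·a, one has N divides 1 + Σ_{j=0}^{m} 2^(2^(n+j)). -/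
theorem stmt_7 (N : ℕ) (hN3 : 3 ≤ N) (hNodd : Odd N)
    (s : ℕ) (hs : s = orderOf (2 : ZMod N))
    (n : ℕ) (hn : 0 < n) (h : 2 ^ n ≡ 1 [MOD s])
    (a : ℕ) (ha : a = orderOf (2 : ZMod s))
    (l : ℕ) (hl : 2 ^ l < s) (hl' : s ≤ 2 ^ (l + 1))
    (b : ℕ) (hb : b = 2 ^ (l + 1) % s)
    (kl kb : ℕ)
    (hkl : kl = 1 + ∑ j ∈ Finset.range (l + 1), 2 ^ (2 ^ j))
    (hkb : kb = ∑ j ∈ Finset.range a, 2 ^ (b * 2 ^ j))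
    (hd : Nat.gcd kb N ∣ kl)
    (r : ℕ) (hr : 0 < r) (hrc : N ∣ kl + r * kb) :
    ∀ i : ℕ,
      N ∣ 1 + ∑ j ∈ Finset.range (l + r * a + i * N * a + 1), 2 ^ (2 ^ (n + j)) := by
  intro i
  have h2s : (2 : ZMod N) ^ s = 1 := by rw [hs]; exact pow_orderOf_eq_one _
  have key : ∀ x y : ℕ, x ≡ y [MOD s] → (2 : ZMod N) ^ x = (2 : ZMod N) ^ y := by
    intro x y hxy
    wlog hle : x ≤ y generalizing x y
    · exact (this y x hxy.symm (by omega)).symm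
    obtain ⟨k, hk⟩ := (Nat.modEq_iff_dvd' hle).mp hxy
    have hy : y = x + s * k := by omega
    rw [hy, pow_add, pow_mul, h2s, one_pow, mul_one]
  have h2as : 2 ^ a ≡ 1 [MOD s] := by
    have h1 : ((2 ^ a : ℕ) : ZMod s) = ((1 : ℕ) : ZMod s) := by
      push_cast
      rw [ha]; exact pow_orderOf_eq_one _
    exact (ZMod.natCast_eq_natCast_iff _ _ _).mp h1
  have hbmod : 2 ^ (l + 1) ≡ b [MOD s] := by
    rw [hb]; exact (Nat.mod_modEq _ s).symm
  have hterm : ∀ j : ℕ, (2 : ZMod N) ^ (2 ^ (n + j)) = (2 : ZMod N) ^ (2 ^ j) := by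
    intro j
    apply key
    calc 2 ^ (n + j) = 2 ^ n * 2 ^ j := by rw [pow_add]
    _ ≡ 1 * 2 ^ j [MOD s] := h.mul_right _
    _ = 2 ^ j := by ring
  have hblock : ∀ q : ℕ,
      ∑ t ∈ Finset.range (q * a), (2 : ZMod N) ^ (2 ^ (l + 1 + t))
        = ((q * kb : ℕ) : ZMod N) := by
    intro q
    induction q with
    | zero => simp
    | succ q ih =>
      rw [Nat.succ_mul, Finset.sum_range_add, ih]
      have hst : ∑ t ∈ Finset.range a, (2 : ZMod N) ^ (2 ^ (l + 1 + (q * a + t)))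
          = ((kb : ℕ) : ZMod N) := by
        rw [hkb]
        push_cast
        apply Finset.sum_congr rfl
        intro t _
        apply key
        calc 2 ^ (l + 1 + (q * a + t)) = 2 ^ (l + 1) * (2 ^ a) ^ q * 2 ^ t := by
              rw [← pow_mul, ← pow_add, ← pow_add]; ring_nf
        _ ≡ b * 1 ^ q * 2 ^ t [MOD s] := (hbmod.mul (h2as.pow q)).mul_right _
        _ = b * 2 ^ t := by ring
      rw [hst]
      push_cast
      ring
  have hq : l + r * a + i * N * a + 1 = (l + 1) + (r + i * N) * a := by ring
  rw [hq, ← ZMod.natCast_eq_zero_iff]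
  push_cast
  simp only [hterm]
  rw [Finset.sum_range_add, hblock]
  have hkl' : (1 : ZMod N) + ∑ j ∈ Finset.range (l + 1), (2 : ZMod N) ^ (2 ^ j)
      = ((kl : ℕ) : ZMod N) := by
    rw [hkl]; push_cast; ring
  rw [← add_assoc, hkl']
  have : ((kl : ℕ) : ZMod N) + (((r + i * N) * kb : ℕ) : ZMod N)
      = (((kl + r * kb) + i * (N * kb) : ℕ) : ZMod N) := by push_cast; ring
  rw [this, Nat.cast_add, (ZMod.natCast_eq_zero_iff _ _).mpr hrc,
    (ZMod.natCast_eq_zero_iff _ _).mpr ⟨i * kb, by ring⟩, add_zero]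
end

section
/- For every positive integer k and every nonnegative integer i, the number 1 + 2^(2^(4k)) + 2^(2^(4k+1)) + ... + 2^(2^(4k + 94 + 124i)) is divisible by 31. -/
private def f31 (n : ℕ) : ZMod 31 := 2 ^ (2 ^ n)

private lemma f31_per (n : ℕ) : f31 (n + 4) = f31 n := by
  unfold f31
  have h : 2 ^ (n + 4) = 2 ^ n + 5 * (3 * 2 ^ n) := by ring
  rw [h, pow_add, pow_mul]
  rw [show ((2 : ZMod 31) ^ 5) = 1 by decide, one_pow, mul_one]

private lemma f31_perAdd (n q : ℕ) : f31 (n + 4 * q) = f31 n := by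
  induction q with
  | zero => rfl
  | succ q ih =>
    have : n + 4 * (q + 1) = (n + 4 * q) + 4 := by ring
    rw [this, f31_per, ih]

private lemma f31_block (m : ℕ) :
    f31 m + f31 (m + 1) + f31 (m + 2) + f31 (m + 3) = 30 := by
  have hm : m = m % 4 + 4 * (m / 4) := by omega
  have h0 : f31 m = f31 (m % 4) := by
    conv_lhs => rw [hm]
    exact f31_perAdd (m % 4) (m / 4)
  have h1 : f31 (m + 1) = f31 (m % 4 + 1) := by
    rw [show m + 1 = (m % 4 + 1) + 4 * (m / 4) by omega, f31_perAdd]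
  have h2 : f31 (m + 2) = f31 (m % 4 + 2) := by
    rw [show m + 2 = (m % 4 + 2) + 4 * (m / 4) by omega, f31_perAdd]
  have h3 : f31 (m + 3) = f31 (m % 4 + 3) := by
    rw [show m + 3 = (m % 4 + 3) + 4 * (m / 4) by omega, f31_perAdd]
  rw [h0, h1, h2, h3]
  have : m % 4 < 4 := by omega
  interval_cases h : m % 4 <;> decide

private lemma f31_sum (t : ℕ) :
    ∑ j ∈ Finset.range (3 + 4 * t), f31 j = 22 + 30 * (t : ZMod 31) := by
  induction t with
  | zero => decide
  | succ t ih =>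
    have h : 3 + 4 * (t + 1) = ((((3 + 4 * t) + 1) + 1) + 1) + 1 := by ring
    rw [h, Finset.sum_range_succ, Finset.sum_range_succ, Finset.sum_range_succ,
      Finset.sum_range_succ, ih]
    have hb := f31_block (3 + 4 * t)
    push_cast
    linear_combination hb

theorem stmt_9 (k i : ℕ) (hk : 0 < k) :
    31 ∣ 1 + ∑ j ∈ Finset.range (94 + 124 * i + 1), 2 ^ (2 ^ (4 * k + j)) := by
  rw [← ZMod.natCast_eq_zero_iff]
  push_cast
  have hs : ∀ j, ((2 : ZMod 31) ^ (2 ^ (4 * k + j))) = f31 j := by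
    intro j
    have : f31 (j + 4 * k) = f31 j := f31_perAdd j k
    rw [← this]
    unfold f31
    rw [show j + 4 * k = 4 * k + j by ring]
  rw [Finset.sum_congr rfl (fun j _ => hs j)]
  rw [show 94 + 124 * i + 1 = 3 + 4 * (23 + 31 * i) by ring, f31_sum]
  push_cast
  rw [show ((31 : ZMod 31)) = 0 by decide]
  ring_nf
  decide
end

section
/- Under the hypotheses of Theorem 1, if additionally N is composite and 2^n ≥ N, then for any proper divisor e of N with 1 < e < N, there are infinitely many positive integers m such that (1 + 2^(2^n) + ... + 2^(2^(n+m)))/e is a composite integer divisible by N/e. -/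
private lemma pow_congr_of_modEq {M : ℕ} {x y : ℕ}
    (hxy : x ≡ y [MOD orderOf (2 : ZMod M)]) :
    (2 : ZMod M) ^ x = (2 : ZMod M) ^ y := by
  rw [← pow_mod_orderOf (2 : ZMod M) x, ← pow_mod_orderOf (2 : ZMod M) y, hxy]

theorem stmt_13 (N : ℕ) (hN3 : 3 ≤ N) (hNodd : Odd N) (hNcomp : ¬ Nat.Prime N)
    (s : ℕ) (hs : s = orderOf (2 : ZMod N))
    (n : ℕ) (hn : 0 < n) (h : 2 ^ n ≡ 1 [MOD s]) (hnN : N ≤ 2 ^ n)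
    (a : ℕ) (ha : a = orderOf (2 : ZMod s))
    (l : ℕ) (hl : 2 ^ l < s) (hl' : s ≤ 2 ^ (l + 1))
    (b : ℕ) (hb : b = 2 ^ (l + 1) % s)
    (kl kb : ℕ)
    (hkl : kl = 1 + ∑ j ∈ Finset.range (l + 1), 2 ^ (2 ^ j))
    (hkb : kb = ∑ j ∈ Finset.range a, 2 ^ (b * 2 ^ j))
    (hd : Nat.gcd kb N ∣ kl)
    (e : ℕ) (he : e ∣ N) (he1 : 1 < e) (heN : e < N) :
    {m : ℕ | 0 < m ∧
      e ∣ (1 + ∑ j ∈ Finset.range (m + 1), 2 ^ (2 ^ (n + j))) ∧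
      (N / e) ∣ (1 + ∑ j ∈ Finset.range (m + 1), 2 ^ (2 ^ (n + j))) / e ∧
      1 < (1 + ∑ j ∈ Finset.range (m + 1), 2 ^ (2 ^ (n + j))) / e ∧
      ¬ Nat.Prime ((1 + ∑ j ∈ Finset.range (m + 1), 2 ^ (2 ^ (n + j))) / e)}.Infinite := by
  have hN0 : 0 < N := by omega
  -- s is positive
  have hs0 : s ≠ 0 := by
    intro h0
    rw [h0] at h
    have : (2:ℕ)^n = 1 := by simpa [Nat.ModEq, Nat.mod_zero] using h
    have : 2 ≤ (2:ℕ)^n := Nat.one_lt_two_pow (by omega)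
    omega
  -- a is positive : (2 : ZMod s)^n = 1
  have h2n' : (2 : ZMod s)^n = 1 := by
    have h2n := (ZMod.natCast_eq_natCast_iff (2^n) 1 s).mpr h
    push_cast at h2n
    exact h2n
  have ha0 : 0 < a := by
    rw [ha]
    exact orderOf_pos_iff.mpr (isOfFinOrder_iff_pow_eq_one.mpr ⟨n, hn, h2n'⟩)
  -- 2^a ≡ 1 [MOD s]
  have h2a : (2:ℕ)^a ≡ 1 [MOD s] := by
    have h' : (2 : ZMod s)^a = 1 := by rw [ha]; exact pow_orderOf_eq_one _
    have h'' : (((2:ℕ)^a : ℕ) : ZMod s) = ((1:ℕ) : ZMod s) := by push_cast; exact h'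
    exact (ZMod.natCast_eq_natCast_iff _ _ _).mp h''
  -- exponent congruences
  have hcong1 : ∀ j : ℕ, (2:ℕ)^(n + j) ≡ 2^j [MOD s] := by
    intro j
    calc (2:ℕ)^(n+j) = 2^n * 2^j := pow_add 2 n j
    _ ≡ 1 * 2^j [MOD s] := h.mul_right _
    _ = 2^j := one_mul _
  have hb' : (2:ℕ)^(l+1) ≡ b [MOD s] := hb ▸ (Nat.mod_modEq _ s).symm
  have hcong2 : ∀ i : ℕ, (2:ℕ)^(n + (l + 1 + i)) ≡ b * 2^(i % a) [MOD s] := by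
    intro i
    have h2i : (2:ℕ)^i ≡ 2^(i % a) [MOD s] := by
      calc (2:ℕ)^i = (2^a)^(i/a) * 2^(i % a) := by
            rw [← pow_mul, ← pow_add]
            congr 1
            exact (Nat.div_add_mod i a).symm ▸ rfl
      _ ≡ 1^(i/a) * 2^(i % a) [MOD s] := (h2a.pow _).mul_right _
      _ = 2^(i % a) := by rw [one_pow, one_mul]
    calc (2:ℕ)^(n + (l+1+i)) = 2^n * (2^(l+1) * 2^i) := by rw [pow_add, pow_add]
    _ ≡ 1 * (b * 2^(i % a)) [MOD s] := h.mul ((hb').mul h2i)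
    _ = b * 2^(i % a) := one_mul _
  -- key computation
  have key : ∀ c : ℕ,
      ((1 + ∑ j ∈ Finset.range (l + c * a + 1), 2 ^ (2 ^ (n + j)) : ℕ) : ZMod N)
        = ((kl + c * kb : ℕ) : ZMod N) := by
    intro c
    push_cast
    have hsplit : l + c * a + 1 = (l + 1) + c * a := by ring
    rw [hsplit, Finset.sum_range_add]
    have h1 : ∑ j ∈ Finset.range (l + 1), (2 : ZMod N) ^ (2 ^ (n + j))
        = ∑ j ∈ Finset.range (l + 1), (2 : ZMod N) ^ (2 ^ j) := by
      refine Finset.sum_congr rfl fun j _ => ?_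
      exact pow_congr_of_modEq (hs ▸ hcong1 j)
    have h2 : ∀ i : ℕ, (2 : ZMod N) ^ (2 ^ (n + (l + 1 + i)))
        = (2 : ZMod N) ^ (b * 2 ^ (i % a)) := fun i =>
      pow_congr_of_modEq (hs ▸ hcong2 i)
    have hkbZ : ((kb : ℕ) : ZMod N) = ∑ i ∈ Finset.range a, (2 : ZMod N) ^ (b * 2 ^ i) := by
      rw [hkb]; push_cast; rfl
    have h3 : ∀ c : ℕ, ∑ i ∈ Finset.range (c * a), (2 : ZMod N) ^ (2 ^ (n + (l + 1 + i)))
        = c * ((kb : ℕ) : ZMod N) := by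
      intro c
      induction c with
      | zero => simp
      | succ c ih =>
        have : (c + 1) * a = c * a + a := by ring
        rw [this, Finset.sum_range_add, ih]
        have h4 : ∑ i ∈ Finset.range a, (2 : ZMod N) ^ (2 ^ (n + (l + 1 + (c * a + i))))
            = ((kb : ℕ) : ZMod N) := by
          rw [hkbZ]
          refine Finset.sum_congr rfl fun i hi => ?_
          rw [h2 (c * a + i)]
          have hmod : (c * a + i) % a = i := by
            rw [mul_comm c a, Nat.mul_add_mod]
            exact Nat.mod_eq_of_lt (Finset.mem_range.mp hi)
          rw [hmod]
        rw [h4]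
        push_cast
        ring
    have hklZ : ((kl : ℕ) : ZMod N) = 1 + ∑ j ∈ Finset.range (l + 1), (2 : ZMod N) ^ (2 ^ j) := by
      rw [hkl]; push_cast; rfl
    rw [h1, h3, hklZ]
    ring
  -- find c₀
  obtain ⟨q, hq⟩ := hd
  set g : ℕ := Nat.gcd kb N with hgdef
  set x : ℤ := Nat.gcdA kb N with hxdef
  set y : ℤ := Nat.gcdB kb N with hydef
  have hbez : (g : ℤ) = kb * x + N * y := Nat.gcd_eq_gcd_ab kb N
  have hNz : (N : ℤ) ≠ 0 := by exact_mod_cast hN0.ne'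
  set z : ℤ := (-x * q) % N with hzdef
  have hz0 : 0 ≤ z := Int.emod_nonneg _ hNz
  have hzmod : z ≡ -x * q [ZMOD N] := Int.emod_emod_of_dvd _ dvd_rfl
  have hdvdZ : (N : ℤ) ∣ (kl : ℤ) + z * kb := by
    have h5 : (N : ℤ) ∣ (kl : ℤ) + (-x * q) * kb := by
      refine ⟨y * q, ?_⟩
      have hqZ : (kl : ℤ) = g * q := by exact_mod_cast hq
      rw [hqZ, hbez]; ring
    have h6 : ((kl : ℤ) + z * kb) ≡ ((kl : ℤ) + (-x * q) * kb) [ZMOD N] :=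
      (hzmod.mul_right _).add_left _
    have h7 : (kl : ℤ) + z * kb
        = ((kl : ℤ) + (-x * q) * kb)
          - (((kl : ℤ) + (-x * q) * kb) - ((kl : ℤ) + z * kb)) := by ring
    rw [h7]
    exact dvd_sub h5 h6.dvd
  -- c₀ in ℕ
  set c₀ : ℕ := z.toNat + N with hc₀def
  have hc₀dvd : ∀ t : ℕ, N ∣ kl + (c₀ + N * t) * kb := by
    intro t
    have hz' : (z.toNat : ℤ) = z := Int.toNat_of_nonneg hz0
    have : (N : ℤ) ∣ ((kl + (c₀ + N * t) * kb : ℕ) : ℤ) := by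
      push_cast [hc₀def, hz']
      have : (kl : ℤ) + (z + ↑N + ↑N * ↑t) * ↑kb
          = ((kl : ℤ) + z * kb) + N * ((1 + t) * kb) := by ring
      rw [this]
      exact dvd_add hdvdZ ⟨(1 + t) * kb, rfl⟩
    exact_mod_cast this
  -- the map giving infinitely many m
  have hmem : ∀ t : ℕ, (l + (c₀ + N * t) * a) ∈
      {m : ℕ | 0 < m ∧
        e ∣ (1 + ∑ j ∈ Finset.range (m + 1), 2 ^ (2 ^ (n + j))) ∧
        (N / e) ∣ (1 + ∑ j ∈ Finset.range (m + 1), 2 ^ (2 ^ (n + j))) / e ∧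
        1 < (1 + ∑ j ∈ Finset.range (m + 1), 2 ^ (2 ^ (n + j))) / e ∧
        ¬ Nat.Prime ((1 + ∑ j ∈ Finset.range (m + 1), 2 ^ (2 ^ (n + j))) / e)} := by
    intro t
    simp only [Set.mem_setOf_eq]
    set c : ℕ := c₀ + N * t with hcdef
    set m : ℕ := l + c * a with hmdef
    set S : ℕ := 1 + ∑ j ∈ Finset.range (m + 1), 2 ^ (2 ^ (n + j)) with hSdef
    have hc1 : 1 ≤ c := by
      have : z.toNat + N ≤ c := Nat.le_add_right _ _
      omega
    have hm0 : 0 < m := by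
      have : 1 * 1 ≤ c * a := Nat.mul_le_mul hc1 ha0
      omega
    -- N divides S
    have hNS : N ∣ S := by
      have h8 : ((S : ℕ) : ZMod N) = ((kl + c * kb : ℕ) : ZMod N) := key c
      have h9 : ((kl + c * kb : ℕ) : ZMod N) = 0 :=
        (ZMod.natCast_eq_zero_iff _ _).mpr (hc₀dvd t)
      exact (ZMod.natCast_eq_zero_iff _ _).mp (h8.trans h9)
    -- S > N
    have hSbig : N < S := by
      have h10 : 2 ^ (2 ^ (n + 0)) ≤ ∑ j ∈ Finset.range (m + 1), 2 ^ (2 ^ (n + j)) :=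
        Finset.single_le_sum (f := fun j => 2 ^ (2 ^ (n + j)))
          (fun i _ => Nat.zero_le _) (Finset.mem_range.mpr (by omega))
      have h11 : (2:ℕ) ^ n ≤ 2 ^ (2 ^ n) :=
        Nat.pow_le_pow_right (by norm_num) (Nat.lt_two_pow_self (n := n)).le
      simp only [Nat.add_zero] at h10
      omega
    obtain ⟨d, hde⟩ := he
    obtain ⟨w, hw⟩ := hNS
    have he0 : 0 < e := by omega
    have hd2 : 2 ≤ d := by
      rcases d with _ | _ | d
      · omega
      · omega
      · omega
    have hw2 : 2 ≤ w := by
      rcases w with _ | _ | w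
      · omega
      · omega
      · omega
    have hSe : S / e = d * w := by
      rw [hw, hde, mul_assoc]
      exact Nat.mul_div_cancel_left _ he0
    have hNe : N / e = d := by
      rw [hde]
      exact Nat.mul_div_cancel_left _ he0
    refine ⟨hm0, ⟨d * w, by rw [hw, hde, mul_assoc]⟩, ?_, ?_, ?_⟩
    · rw [hSe, hNe]; exact ⟨w, rfl⟩
    · rw [hSe]; nlinarith
    · rw [hSe]
      intro hp
      rcases hp.eq_one_or_self_of_dvd d ⟨w, rfl⟩ with h1 | h1
      · omega
      · have : d * 1 = d * w := by omega
        have : 1 = w := Nat.eq_of_mul_eq_mul_left (by omega) this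
        omega
  have hinj : StrictMono (fun t : ℕ => l + (c₀ + N * t) * a) := by
    intro t₁ t₂ hlt
    simp only
    have h1 : c₀ + N * t₁ < c₀ + N * t₂ := by
      have := Nat.mul_lt_mul_of_pos_left hlt hN0
      omega
    have h2 := Nat.mul_lt_mul_of_pos_right h1 ha0
    omega
  exact Set.infinite_of_injective_forall_mem hinj.injective hmem
end

section
/- Let N = 2^p − 1 and p = 2^q − 1 both be primes, and set k_l = 1 + 2 + 2^(2^1) + 2^(2^2) + ... + 2^(2^(q−1)) and k_b = 2 + 2^(2^1) + 2^(2^2) + ... + 2^(2^(q−1)) (so k_l = 1 + k_b). Assume N does not divide k_b, and let r be a positive integer with k_l + r·k_b ≡ 0 (mod N). Then for all positive integers k and all i ≥ 0, N divides 1 + 2^(2^(qk)) + 2^(2^(qk+1)) + ... + 2^(2^(qk+m)) where m = (q−1) + r·q + i·q·(2^p − 1). -/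
theorem stmt_18 (p q : ℕ) (hq : Nat.Prime q) (hpq : p = 2 ^ q - 1)
    (hp : Nat.Prime p) (hN : Nat.Prime (2 ^ p - 1))
    (kb kl : ℕ) (hkb : kb = ∑ j ∈ Finset.range q, 2 ^ (2 ^ j))
    (hkl : kl = 1 + kb)
    (hnd : ¬ (2 ^ p - 1) ∣ kb)
    (r : ℕ) (hr : 0 < r) (hrc : (2 ^ p - 1) ∣ kl + r * kb) :
    ∀ k i : ℕ, 0 < k →
      (2 ^ p - 1) ∣
        1 + ∑ j ∈ Finset.range ((q - 1) + r * q + i * q * (2 ^ p - 1) + 1),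
          2 ^ (2 ^ (q * k + j)) := by
  intro k i hk
  set N := 2 ^ p - 1 with hNdef
  haveI : NeZero N := ⟨hN.pos.ne'⟩
  have hq2 := hq.two_le
  have hp2 := hp.two_le
  have hpow : 2 ^ p = N + 1 := by
    have : 1 ≤ 2 ^ p := Nat.one_le_two_pow
    omega
  have h2p : (2 : ZMod N) ^ p = 1 := by
    have h := congrArg (Nat.cast : ℕ → ZMod N) hpow
    push_cast at h
    simpa [ZMod.natCast_self] using h
  have hmodp : ∀ a : ℕ, (2 : ZMod N) ^ a = (2 : ZMod N) ^ (a % p) := by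
    intro a
    conv_lhs => rw [← Nat.div_add_mod a p]
    rw [pow_add, pow_mul, h2p, one_pow, one_mul]
  have hq2p : 2 ^ q = p + 1 := by
    have h1 : 1 ≤ 2 ^ q := Nat.one_le_two_pow
    omega
  have hexp : ∀ a : ℕ, 2 ^ a % p = 2 ^ (a % q) % p := by
    intro a
    conv_lhs => rw [← Nat.div_add_mod a q]
    rw [pow_add, pow_mul, Nat.mul_mod, Nat.pow_mod, hq2p]
    have h1p : 1 % p = 1 := Nat.one_mod_eq_one.mpr hp.one_lt.ne'
    simp [Nat.add_mod_left, h1p, ← Nat.mul_mod]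
  have hf : ∀ a : ℕ, (2 : ZMod N) ^ (2 ^ a) = (2 : ZMod N) ^ (2 ^ (a % q)) := by
    intro a
    rw [hmodp (2 ^ a), hexp a, ← hmodp]
  have hper : ∀ c : ℕ, ∑ j ∈ Finset.range (q * c), (2 : ZMod N) ^ (2 ^ (j % q))
      = c • ∑ t ∈ Finset.range q, (2 : ZMod N) ^ (2 ^ t) := by
    intro c
    induction c with
    | zero => simp
    | succ c ih =>
      rw [Nat.mul_succ, Finset.sum_range_add, ih, succ_nsmul]
      congr 1
      refine Finset.sum_congr rfl fun t ht => ?_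
      have hmt : (q * c + t) % q = t := by
        rw [Nat.mul_comm, Nat.add_comm, Nat.add_mul_mod_self_right]
        exact Nat.mod_eq_of_lt (Finset.mem_range.mp ht)
      rw [hmt]
  have hL : (q - 1) + r * q + i * q * N + 1 = q * (1 + r + i * N) := by
    obtain ⟨n, hn⟩ : ∃ n, q = n + 1 := ⟨q - 1, by omega⟩
    subst hn
    simp only [Nat.add_sub_cancel]
    ring
  rw [← ZMod.natCast_eq_zero_iff]
  push_cast
  have hterm : ∀ j : ℕ, (2 : ZMod N) ^ (2 ^ (q * k + j)) = (2 : ZMod N) ^ (2 ^ (j % q)) := by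
    intro j
    rw [hf]
    congr 2
    rw [Nat.add_comm, Nat.add_mul_mod_self_left]
  calc (1 : ZMod N) + ∑ j ∈ Finset.range ((q - 1) + r * q + i * q * N + 1),
        (2 : ZMod N) ^ (2 ^ (q * k + j))
      = 1 + ∑ j ∈ Finset.range (q * (1 + r + i * N)), (2 : ZMod N) ^ (2 ^ (j % q)) := by
        rw [hL]
        exact congrArg _ (Finset.sum_congr rfl fun j _ => hterm j)
    _ = 1 + (1 + r + i * N) • ∑ t ∈ Finset.range q, (2 : ZMod N) ^ (2 ^ t) := by
        rw [hper]
    _ = ((kl + r * kb : ℕ) : ZMod N) := by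
        have hkbz : ((kb : ℕ) : ZMod N) = ∑ t ∈ Finset.range q, (2 : ZMod N) ^ (2 ^ t) := by
          rw [hkb]; push_cast; rfl
        rw [nsmul_eq_mul, ← hkbz]
        push_cast [hkl]
        rw [ZMod.natCast_self]
        ring
    _ = 0 := (ZMod.natCast_eq_zero_iff _ _).mpr hrc
end

section
/- Let N = 2^p − 1 and p = 2^q − 1 both be primes, k_b = Σ_{j=0}^{q−1} 2^(2^j) and k_l = 1 + k_b, with N not dividing k_b, and r a positive integer with k_l + r·k_b ≡ 0 (mod N). Then for all positive integers k and all i ≥ 0, with m = (q−1) + r·q + i·q·(2^p−1), one has F_{qk} + F_{qk+1} + ... + F_{qk+m} ≡ q − 1 + r·q (mod 2^p − 1), where F_j = 2^(2^j) + 1 is the j-th Fermat number. -/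
private lemma pow_key (n M a : ℕ) (h : 2 ^ n ≡ 1 [MOD M]) :
    (2:ℕ) ^ a ≡ 2 ^ (a % n) [MOD M] := by
  conv_lhs => rw [← Nat.div_add_mod a n]
  rw [pow_add, pow_mul]
  calc ((2:ℕ)^n)^(a/n) * 2^(a%n) ≡ 1^(a/n) * 2^(a%n) [MOD M] := (h.pow _).mul_right _
    _ = 2^(a%n) := by rw [one_pow, one_mul]

theorem stmt_19 (p q : ℕ) (hq : Nat.Prime q) (hpq : p = 2 ^ q - 1)
    (hp : Nat.Prime p) (hN : Nat.Prime (2 ^ p - 1))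
    (kb kl : ℕ) (hkb : kb = ∑ j ∈ Finset.range q, 2 ^ (2 ^ j))
    (hkl : kl = 1 + kb)
    (hnd : ¬ (2 ^ p - 1) ∣ kb)
    (r : ℕ) (hr : 0 < r) (hrc : (2 ^ p - 1) ∣ kl + r * kb) :
    ∀ k i : ℕ, 0 < k →
      (∑ j ∈ Finset.range ((q - 1) + r * q + i * q * (2 ^ p - 1) + 1),
          (2 ^ (2 ^ (q * k + j)) + 1)) ≡ (q - 1) + r * q [MOD 2 ^ p - 1] := by
  intro k i hk
  set N := 2 ^ p - 1 with hNdef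
  have h2p : (2:ℕ) ^ p ≡ 1 [MOD N] :=
    ((Nat.modEq_iff_dvd' Nat.one_le_two_pow).mpr dvd_rfl).symm
  have h2q : (2:ℕ) ^ q ≡ 1 [MOD p] := by
    refine ((Nat.modEq_iff_dvd' Nat.one_le_two_pow).mpr ?_).symm
    rw [hpq]
  -- each term congruence
  have term : ∀ j : ℕ,
      (2:ℕ) ^ (2 ^ (q * k + j)) + 1 ≡ 2 ^ (2 ^ (j % q)) + 1 [MOD N] := by
    intro j
    have hA : (2:ℕ) ^ (q * k + j) ≡ 2 ^ (j % q) [MOD p] := by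
      have h1 := pow_key q p (q * k + j) h2q
      have h2 := pow_key q p (j % q) h2q
      have : (q * k + j) % q = (j % q) % q := by
        simp [Nat.mul_add_mod]
      rw [this] at h1
      exact h1.trans h2.symm
    have h1 := pow_key p N (2 ^ (q * k + j)) h2p
    have h2 := pow_key p N (2 ^ (j % q)) h2p
    rw [hA] at h1
    exact (h1.trans h2.symm).add_right 1
  -- periodic sum
  have hsum : ∀ c : ℕ, ∑ j ∈ Finset.range (q * c), ((2:ℕ) ^ (2 ^ (j % q)) + 1)
      = c * ∑ t ∈ Finset.range q, ((2:ℕ) ^ (2 ^ t) + 1) := by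
    intro c
    induction c with
    | zero => simp
    | succ c ih =>
      rw [Nat.mul_succ, Finset.sum_range_add, ih, Nat.succ_mul]
      congr 1
      refine Finset.sum_congr rfl fun t ht => ?_
      rw [Nat.mul_comm q c, Nat.mul_comm c q, Nat.mul_add_mod, Nat.mod_eq_of_lt (Finset.mem_range.mp ht)]
  have hqpos : 0 < q := hq.pos
  have hlen : (q - 1) + r * q + i * q * N + 1 = q * (1 + r + i * N) := by
    have h1 : q - 1 + 1 = q := Nat.succ_pred_eq_of_pos hqpos
    calc (q - 1) + r * q + i * q * N + 1 = (q - 1 + 1) + r * q + i * q * N := by ring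
      _ = q + r * q + i * q * N := by rw [h1]
      _ = q * (1 + r + i * N) := by ring
  set c := 1 + r + i * N with hc
  have hperiod : ∑ t ∈ Finset.range q, ((2:ℕ) ^ (2 ^ t) + 1) = kb + q := by
    rw [hkb, Finset.sum_add_distrib, Finset.sum_const, Finset.card_range, smul_eq_mul,
      mul_one]
  -- sum congruence
  have step1 : (∑ j ∈ Finset.range (q * c), ((2:ℕ) ^ (2 ^ (q * k + j)) + 1))
      ≡ c * (kb + q) [MOD N] := by
    have : (∑ j ∈ Finset.range (q * c), ((2:ℕ) ^ (2 ^ (q * k + j)) + 1)) % N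
        = (∑ j ∈ Finset.range (q * c), ((2:ℕ) ^ (2 ^ (j % q)) + 1)) % N := by
      rw [Finset.sum_nat_mod, Finset.sum_nat_mod _ _ (fun j => (2:ℕ) ^ (2 ^ (j % q)) + 1)]
      congr 1
      exact Finset.sum_congr rfl fun j _ => term j
    have h := (Nat.ModEq)
    calc (∑ j ∈ Finset.range (q * c), ((2:ℕ) ^ (2 ^ (q * k + j)) + 1))
        ≡ (∑ j ∈ Finset.range (q * c), ((2:ℕ) ^ (2 ^ (j % q)) + 1)) [MOD N] := this
      _ = c * (kb + q) := by rw [hsum, hperiod]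
  -- arithmetic rearrangement
  have hsplit : c * (kb + q) = (kl + r * kb) + ((q - 1) + r * q) + (i * N) * (kb + q) := by
    have h1 : q - 1 + 1 = q := Nat.succ_pred_eq_of_pos hqpos
    rw [hkl]
    calc c * (kb + q) = (1 + r + i * N) * (kb + q) := by rw [hc]
      _ = ((1 + kb + r * kb) + ((q - 1 + 1 - 1) + r * q) + (i * N) * (kb + q)) := by
          rw [h1]; ring_nf; omega
  have hdvd2 : N ∣ (i * N) * (kb + q) := ⟨i * (kb + q), by ring⟩
  have step2 : c * (kb + q) ≡ (q - 1) + r * q [MOD N] := by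
    rw [hsplit]
    have ha : (kl + r * kb) ≡ 0 [MOD N] := (Nat.modEq_zero_iff_dvd).mpr hrc
    have hb : (i * N) * (kb + q) ≡ 0 [MOD N] := (Nat.modEq_zero_iff_dvd).mpr hdvd2
    calc (kl + r * kb) + ((q - 1) + r * q) + (i * N) * (kb + q)
        ≡ 0 + ((q - 1) + r * q) + 0 [MOD N] := ((ha.add_right _).add hb)
      _ = (q - 1) + r * q := by ring
  rw [hlen]
  exact step1.trans step2
end
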